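/- For integers k₁, k₂ ≥ 1, on {u₁ ≠ u₂} ⊂ ℝ⁴ with canonical Poisson bracket, the functions A = (p_{u₁}/k₁)²/(u₁−u₂) + (p_{u₂}/k₂)²/(u₂−u₁) − u₁² − u₁u₂ − u₂² and B = u₂(p_{u₁}/k₁)²/(u₂−u₁) + u₁(p_{u₂}/k₂)²/(u₁−u₂) + (u₁+u₂)u₁u₂ are in involution: {A, B} = 0. -/

import Mathlib

/-- Canonical Poisson bracket on phase space ℝ⁴ with coordinates
(u₁, u₂, p₁, p₂):  {F,G} = Σᵢ (∂F/∂uᵢ ∂G/∂pᵢ − ∂F/∂pᵢ ∂G/∂uᵢ). -/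
noncomputable def pb (F G : ℝ × ℝ × ℝ × ℝ → ℝ) (z : ℝ × ℝ × ℝ × ℝ) : ℝ :=
  fderiv ℝ F z (1, 0, 0, 0) * fderiv ℝ G z (0, 0, 1, 0)
  - fderiv ℝ F z (0, 0, 1, 0) * fderiv ℝ G z (1, 0, 0, 0)
  + fderiv ℝ F z (0, 1, 0, 0) * fderiv ℝ G z (0, 0, 0, 1)
  - fderiv ℝ F z (0, 0, 0, 1) * fderiv ℝ G z (0, 1, 0, 0)


private theorem hasFDerivAt_div' {E : Type*} [NormedAddCommGroup E] [NormedSpace ℝ E]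
    {f g : E → ℝ} {f' g' : E →L[ℝ] ℝ} {x : E}
    (hf : HasFDerivAt f f' x) (hg : HasFDerivAt g g' x) (hx : g x ≠ 0) :
    HasFDerivAt (fun y => f y / g y)
      ((g x)⁻¹ • f' - (f x * ((g x) ^ 2)⁻¹) • g') x := by
  have h : HasFDerivAt (fun y => f y * ((fun t : ℝ => t⁻¹) ∘ g) y) _ x :=
    hf.mul ((hasDerivAt_inv hx).comp_hasFDerivAt x hg)
  have heq : (fun y => f y / g y) = (fun y => f y * ((fun t : ℝ => t⁻¹) ∘ g) y) := by
    funext y; simp [div_eq_mul_inv, Function.comp]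
  rw [heq]
  refine h.congr_fderiv ?_
  ext v
  simp only [ContinuousLinearMap.add_apply, ContinuousLinearMap.sub_apply,
    ContinuousLinearMap.smul_apply, smul_eq_mul, Function.comp_apply]
  ring

private theorem hasFDerivAt_sq' {E : Type*} [NormedAddCommGroup E] [NormedSpace ℝ E]
    {f : E → ℝ} {f' : E →L[ℝ] ℝ} {x : E} (hf : HasFDerivAt f f' x) :
    HasFDerivAt (fun y => f y ^ 2) ((2 * f x) • f') x := by
  have h : HasFDerivAt (fun y => f y * f y) _ x := hf.mul hf
  have heq : (fun y => f y ^ 2) = fun y => f y * f y := by funext y; ring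
  rw [heq]
  refine h.congr_fderiv ?_
  ext v
  simp only [ContinuousLinearMap.add_apply, ContinuousLinearMap.smul_apply, smul_eq_mul]
  ring

set_option maxHeartbeats 2000000 in
/-- For positive integers k₁, k₂ the deformed functions A, B are in
involution on {u₁ ≠ u₂}. -/
theorem stmt_6 (k₁ k₂ : ℤ) (hk₁ : 1 ≤ k₁) (hk₂ : 1 ≤ k₂) :
    ∀ z : ℝ × ℝ × ℝ × ℝ, z.1 ≠ z.2.1 →
      pb (fun z => (z.2.2.1 / (k₁ : ℝ)) ^ 2 / (z.1 - z.2.1)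
            + (z.2.2.2 / (k₂ : ℝ)) ^ 2 / (z.2.1 - z.1)
            - z.1 ^ 2 - z.1 * z.2.1 - z.2.1 ^ 2)
         (fun z => z.2.1 * (z.2.2.1 / (k₁ : ℝ)) ^ 2 / (z.2.1 - z.1)
            + z.1 * (z.2.2.2 / (k₂ : ℝ)) ^ 2 / (z.1 - z.2.1)
            + (z.1 + z.2.1) * z.1 * z.2.1) z = 0 := by
  rintro ⟨a, b, c, d⟩ hne
  simp only at hne
  have hk1 : (k₁ : ℝ) ≠ 0 := Int.cast_ne_zero.2 (by omega)
  have hk2 : (k₂ : ℝ) ≠ 0 := Int.cast_ne_zero.2 (by omega)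
  have hab : a - b ≠ 0 := sub_ne_zero.2 hne
  have hba : b - a ≠ 0 := sub_ne_zero.2 (Ne.symm hne)
  have h1 : HasFDerivAt (fun z : ℝ × ℝ × ℝ × ℝ => z.1)
      (ContinuousLinearMap.fst ℝ ℝ (ℝ × ℝ × ℝ)) (a, b, c, d) := hasFDerivAt_fst
  have h2 : HasFDerivAt (fun z : ℝ × ℝ × ℝ × ℝ => z.2.1)
      ((ContinuousLinearMap.fst ℝ ℝ (ℝ × ℝ)).comp
        (ContinuousLinearMap.snd ℝ ℝ (ℝ × ℝ × ℝ))) (a, b, c, d) :=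
    hasFDerivAt_fst.comp _ hasFDerivAt_snd
  have h3 : HasFDerivAt (fun z : ℝ × ℝ × ℝ × ℝ => z.2.2.1)
      (((ContinuousLinearMap.fst ℝ ℝ ℝ).comp
        (ContinuousLinearMap.snd ℝ ℝ (ℝ × ℝ))).comp
        (ContinuousLinearMap.snd ℝ ℝ (ℝ × ℝ × ℝ))) (a, b, c, d) :=
    (hasFDerivAt_fst.comp _ hasFDerivAt_snd).comp _ hasFDerivAt_snd
  have h4 : HasFDerivAt (fun z : ℝ × ℝ × ℝ × ℝ => z.2.2.2)
      (((ContinuousLinearMap.snd ℝ ℝ ℝ).comp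
        (ContinuousLinearMap.snd ℝ ℝ (ℝ × ℝ))).comp
        (ContinuousLinearMap.snd ℝ ℝ (ℝ × ℝ × ℝ))) (a, b, c, d) :=
    (hasFDerivAt_snd.comp _ hasFDerivAt_snd).comp _ hasFDerivAt_snd
  have hp1 := hasFDerivAt_sq' (hasFDerivAt_div' h3 (hasFDerivAt_const (k₁:ℝ) _) hk1)
  have hp2 := hasFDerivAt_sq' (hasFDerivAt_div' h4 (hasFDerivAt_const (k₂:ℝ) _) hk2)
  have hA := (((hasFDerivAt_div' hp1 (h1.sub h2) hab).add (hasFDerivAt_div' hp2 (h2.sub h1) hba)).sub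
      (hasFDerivAt_sq' h1)).sub (h1.mul h2) |>.sub (hasFDerivAt_sq' h2)
  have hB := ((hasFDerivAt_div' (h2.mul hp1) (h2.sub h1) hba).add
      (hasFDerivAt_div' (h1.mul hp2) (h1.sub h2) hab)).add (((h1.add h2).mul h1).mul h2)
  rw [pb, (show HasFDerivAt (fun z : ℝ × ℝ × ℝ × ℝ => (z.2.2.1 / (k₁ : ℝ)) ^ 2 / (z.1 - z.2.1)
            + (z.2.2.2 / (k₂ : ℝ)) ^ 2 / (z.2.1 - z.1)
            - z.1 ^ 2 - z.1 * z.2.1 - z.2.1 ^ 2) _ _ from hA).fderiv,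
    (show HasFDerivAt (fun z : ℝ × ℝ × ℝ × ℝ => z.2.1 * (z.2.2.1 / (k₁ : ℝ)) ^ 2 / (z.2.1 - z.1)
            + z.1 * (z.2.2.2 / (k₂ : ℝ)) ^ 2 / (z.1 - z.2.1)
            + (z.1 + z.2.1) * z.1 * z.2.1) _ _ from hB).fderiv]
  simp only [ContinuousLinearMap.add_apply, ContinuousLinearMap.sub_apply,
    ContinuousLinearMap.smul_apply, ContinuousLinearMap.comp_apply,
    ContinuousLinearMap.coe_fst', ContinuousLinearMap.coe_snd',
    ContinuousLinearMap.zero_apply, smul_eq_mul, Pi.add_apply, Pi.sub_apply, Pi.mul_apply]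
  field_simp
  ring
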